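/- Let L be a unimodular Hermitian lattice over O_F (F an imaginary quadratic field with unit group {±1}) and ℓ ∈ L a primitive vector with ⟨ℓ,ℓ⟩ < 0 such that the reflection σ_{ℓ,-1}: v ↦ v - 2⟨v,ℓ⟩/⟨ℓ,ℓ⟩·ℓ preserves L and L/(ℓO_F ⊕ K_ℓ) ≅ O_F/2O_F. Then ⟨ℓ,ℓ⟩ = -2. -/

import Mathlib

open NumberField

/-- A Hermitian form on a module `M` over a ring `R` with respect to a ring
endomorphism `σ` of `R` (the conjugation). -/
def IsHermitianForm (R : Type*) [CommRing R] (σ : R →+* R)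
    {M : Type*} [AddCommGroup M] [Module R M] (h : M → M → R) : Prop :=
  (∀ x y z : M, h (x + y) z = h x z + h y z) ∧
  (∀ (r : R) (x y : M), h (r • x) y = r * h x y) ∧
  (∀ x y : M, h y x = σ (h x y))

/-- The orthogonal complement `K_ℓ = ℓ^⊥ ∩ L = {w ∈ L ∣ ⟨w,ℓ⟩ = 0}`. -/
def orthComplement {R : Type*} [CommRing R] {σ : R →+* R}
    {M : Type*} [AddCommGroup M] [Module R M] {h : M → M → R}
    (hherm : IsHermitianForm R σ h) (ℓ : M) : Submodule R M where
  carrier := {w | h w ℓ = 0}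
  add_mem' := by
    intro a b ha hb
    show h (a + b) ℓ = 0
    rw [hherm.1, ha, hb, add_zero]
  zero_mem' := by
    have h0 := hherm.1 0 0 ℓ
    simp only [add_zero] at h0
    exact left_eq_add.mp h0
  smul_mem' := by
    intro r a ha
    show h (r • a) ℓ = 0
    rw [hherm.2.1, ha, mul_zero]

open IntermediateField


lemma aux_not_isUnit_intCast (F : Type) [Field F] [NumberField F] {m : ℤ}
    (hm : 2 ≤ m.natAbs) : ¬ IsUnit ((m : 𝓞 F)) := by
  intro hu
  have h1 : IsUnit ((Algebra.norm ℤ) ((m : 𝓞 F))) := hu.map (Algebra.norm ℤ)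
  have h2 : ((m : 𝓞 F)) = algebraMap ℤ (𝓞 F) m := by
    simp [algebraMap_int_eq, map_intCast]
  let b := Module.Free.chooseBasis ℤ (𝓞 F)
  rw [h2, Algebra.norm_algebraMap_of_basis b] at h1
  have h3 := Int.isUnit_iff.mp h1
  have hcard : Fintype.card (Module.Free.ChooseBasisIndex ℤ (𝓞 F)) ≠ 0 := by
    have : Nonempty (Module.Free.ChooseBasisIndex ℤ (𝓞 F)) := b.index_nonempty
    exact Fintype.card_ne_zero
  have h4 : m.natAbs ^ Fintype.card (Module.Free.ChooseBasisIndex ℤ (𝓞 F)) = 1 := by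
    rcases h3 with h | h
    · rw [← Int.natAbs_pow, h]; rfl
    · rw [← Int.natAbs_pow, h]; rfl
  have h5 : 1 < m.natAbs ^ Fintype.card (Module.Free.ChooseBasisIndex ℤ (𝓞 F)) :=
    Nat.one_lt_pow hcard (by omega)
  omega

lemma aux_int_of_real (F : Type) [Field F] [NumberField F]
    (hdeg : Module.finrank ℚ F = 2)
    (himag : ∀ v : InfinitePlace F, v.IsComplex)
    (ι : F →+* ℂ) (x : 𝓞 F)
    (hx : ι (algebraMap (𝓞 F) F x) = starRingEnd ℂ (ι (algebraMap (𝓞 F) F x))) :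
    ∃ m : ℤ, x = (m : 𝓞 F) := by
  set y : F := algebraMap (𝓞 F) F x with hy
  -- step 1: y is rational
  have hrat : ∃ q : ℚ, y = algebraMap ℚ F q := by
    by_contra hq
    push_neg at hq
    -- ℚ⟮y⟯ ≠ ⊥
    have hne : ℚ⟮y⟯ ≠ ⊥ := by
      intro hb
      have : y ∈ (⊥ : IntermediateField ℚ F) :=
        hb ▸ IntermediateField.mem_adjoin_simple_self ℚ y
      rw [IntermediateField.mem_bot] at this
      obtain ⟨q, hq'⟩ := this
      exact hq q hq'.symm
    have h1 : Module.finrank ℚ ℚ⟮y⟯ ≠ 1 :=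
      fun h => hne (IntermediateField.finrank_eq_one_iff.mp h)
    have hmul : Module.finrank ℚ ℚ⟮y⟯ * Module.finrank ℚ⟮y⟯ F = 2 := by
      rw [Module.finrank_mul_finrank, hdeg]
    have hpos : 0 < Module.finrank ℚ ℚ⟮y⟯ := Module.finrank_pos
    have h2 : Module.finrank ℚ ℚ⟮y⟯ = 2 := by
      have hdvd : Module.finrank ℚ ℚ⟮y⟯ ∣ 2 := ⟨_, hmul.symm⟩
      have hle := Nat.le_of_dvd (by norm_num) hdvd
      omega
    have htop : ℚ⟮y⟯ = ⊤ := by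
      apply IntermediateField.eq_of_le_of_finrank_eq le_top
      rw [h2, IntermediateField.finrank_top', hdeg]
    -- equalizer subfield
    set φ : F →+* ℂ := (starRingEnd ℂ).comp ι with hφ
    have halg : ∀ q : ℚ, algebraMap ℚ F q ∈ RingHom.eqLocusField φ ι := by
      intro q
      have h5 : algebraMap ℚ F q = (q : F) := by rw [eq_ratCast]
      show φ (algebraMap ℚ F q) = ι (algebraMap ℚ F q)
      rw [h5, map_ratCast, map_ratCast]
    have hle : ℚ⟮y⟯ ≤ (RingHom.eqLocusField φ ι).toIntermediateField halg := by
      rw [IntermediateField.adjoin_le_iff, Set.singleton_subset_iff]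
      show φ y = ι y
      exact hx.symm
    have hTtop : ∀ z : F, φ z = ι z := by
      intro z
      rw [htop] at hle
      exact hle (IntermediateField.mem_top (x := z))
    -- ι is a real embedding, contradiction
    have hreal : NumberField.ComplexEmbedding.IsReal ι := by
      rw [NumberField.ComplexEmbedding.isReal_iff]
      ext z
      exact hTtop z
    have hc := himag (InfinitePlace.mk ι)
    rw [NumberField.InfinitePlace.isComplex_mk_iff] at hc
    exact hc hreal
  obtain ⟨q, hq⟩ := hrat
  -- step 2: q is an integer
  have hint : IsIntegral ℤ q := by
    have h1 : IsIntegral ℤ y := x.2.algebraMap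
    rw [hq] at h1
    exact (isIntegral_algebraMap_iff (algebraMap ℚ F).injective).mp h1
  obtain ⟨m, hm⟩ := IsIntegrallyClosed.isIntegral_iff.mp hint
  refine ⟨m, ?_⟩
  apply NumberField.RingOfIntegers.coe_injective
  show y = algebraMap (𝓞 F) F ((m : ℤ) : 𝓞 F)
  rw [hq, ← hm]
  simp

set_option synthInstance.maxHeartbeats 1000000 in
set_option maxHeartbeats 1000000 in
/-- Let `L` be a unimodular Hermitian lattice over `𝓞 F`, where `F` is an
imaginary quadratic field whose discriminant is not divisible by `4` and
`F ≠ ℚ(√-3)` (so `𝓞 F^× = {±1}`), and let `ℓ ∈ L` be a primitive vector with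
`⟨ℓ,ℓ⟩ < 0` such that the reflection `σ_{ℓ,-1} : v ↦ v - 2⟨v,ℓ⟩/⟨ℓ,ℓ⟩·ℓ`
preserves `L` (i.e. `⟨ℓ,ℓ⟩ ∣ 2⟨v,ℓ⟩` for all `v ∈ L`) and
`L/(ℓ𝓞 F ⊕ K_ℓ) ≅ 𝓞 F/2𝓞 F`.  Then `⟨ℓ,ℓ⟩ = -2`. -/
theorem reflective_vector_norm_eq_neg_two
    (F : Type) [Field F] [NumberField F]
    (hdeg : Module.finrank ℚ F = 2)
    (himag : ∀ v : InfinitePlace F, v.IsComplex)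
    (hdisc4 : ¬ (4 : ℤ) ∣ NumberField.discr F)
    (hdisc3 : NumberField.discr F ≠ -3)
    (σ : 𝓞 F →+* 𝓞 F) (ι : F →+* ℂ)
    (hσ : ∀ x : 𝓞 F, ι (algebraMap (𝓞 F) F (σ x)) = starRingEnd ℂ (ι (algebraMap (𝓞 F) F x)))
    (M : Type) [AddCommGroup M] [Module (𝓞 F) M]
    [Module.Free (𝓞 F) M] [Module.Finite (𝓞 F) M]
    (h : M → M → 𝓞 F) (hherm : IsHermitianForm (𝓞 F) σ h)
    -- `L` is unimodular: the form is nondegenerate and induces a surjection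
    -- onto the dual module, i.e. `L = L^∨`
    (hnd : ∀ x : M, (∀ y : M, h x y = 0) → x = 0)
    (hunimod : ∀ f : M →ₗ[𝓞 F] 𝓞 F, ∃ v : M, ∀ w : M, f w = h w v)
    (ℓ : M)
    (hprim : ∀ (r : 𝓞 F) (x : M), ℓ = r • x → IsUnit r)
    (hneg : (ι (algebraMap (𝓞 F) F (h ℓ ℓ))).re < 0)
    -- the reflection `σ_{ℓ,-1}` preserves `L`
    (hrefl : ∀ v : M, h ℓ ℓ ∣ 2 * h v ℓ)
    -- `L/(ℓ𝓞 F ⊕ K_ℓ) ≅ 𝓞 F/2𝓞 F`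
    (hquot : Nonempty ((M ⧸ (Submodule.span (𝓞 F) {ℓ} ⊔ orthComplement hherm ℓ))
      ≃ₗ[𝓞 F] ((𝓞 F) ⧸ Ideal.span {(2 : 𝓞 F)}))) :
    h ℓ ℓ = -2 := by
  have hadd := hherm.1
  have hsmul := hherm.2.1
  have hconj := hherm.2.2
  have hσa : σ (h ℓ ℓ) = h ℓ ℓ := (hconj ℓ ℓ).symm
  have ha0 : h ℓ ℓ ≠ 0 := by
    intro h0
    rw [h0] at hneg
    simp at hneg
  have hxr := hσ (h ℓ ℓ)
  rw [hσa] at hxr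
  obtain ⟨m, hm⟩ := aux_int_of_real F hdeg himag ι (h ℓ ℓ) hxr
  have hmneg : m < 0 := by
    rw [hm] at hneg
    simp only [map_intCast, Complex.intCast_re] at hneg
    exact_mod_cast hneg
  -- construct the dual vector u with 2•ℓ = ⟨ℓ,ℓ⟩•u
  have hdiv : ∀ v : M, ∃ c, 2 * h v ℓ = h ℓ ℓ * c := hrefl
  choose g hg using hdiv
  have gadd : ∀ v w : M, g (v + w) = g v + g w := by
    intro v w
    apply mul_left_cancel₀ ha0
    rw [mul_add, ← hg, ← hg, ← hg, hadd]
    ring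
  have gsmul : ∀ (r : 𝓞 F) (v : M), g (r • v) = r * g v := by
    intro r v
    apply mul_left_cancel₀ ha0
    rw [← hg, hsmul, show h ℓ ℓ * (r * g v) = r * (h ℓ ℓ * g v) by ring, ← hg]
    ring
  obtain ⟨u, hu⟩ := hunimod
    { toFun := g, map_add' := gadd, map_smul' := gsmul : M →ₗ[𝓞 F] 𝓞 F }
  have key : (2 : 𝓞 F) • ℓ = (h ℓ ℓ) • u := by
    have hz : ∀ w : M, h ((2 : 𝓞 F) • ℓ - (h ℓ ℓ) • u) w = 0 := by
      intro w
      have h1 := hadd ((2 : 𝓞 F) • ℓ - (h ℓ ℓ) • u) ((h ℓ ℓ) • u) w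
      rw [sub_add_cancel] at h1
      rw [eq_sub_of_add_eq h1.symm, hsmul, hsmul]
      rw [hconj w ℓ, hconj w u, ← hu w]
      rw [show (2:𝓞 F) * σ (h w ℓ) = σ ((2:𝓞 F) * h w ℓ) by rw [map_mul, map_ofNat]]
      rw [hg w, map_mul, hσa]
      show h ℓ ℓ * σ (g w) - h ℓ ℓ * σ (g w) = 0
      ring
    exact sub_eq_zero.mp (hnd _ hz)
  rw [hm] at key
  by_cases hm1 : m = -1
  · exfalso
    have htop : Submodule.span (𝓞 F) {ℓ} ⊔ orthComplement hherm ℓ = ⊤ := by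
      rw [eq_top_iff]
      rintro v -
      have hmem : v + (h v ℓ) • ℓ ∈ orthComplement hherm ℓ := by
        show h (v + (h v ℓ) • ℓ) ℓ = 0
        rw [hadd, hsmul, hm, hm1]
        push_cast
        ring
      have hv : v = (-(h v ℓ)) • ℓ + (v + (h v ℓ) • ℓ) := by
        rw [neg_smul]; abel
      rw [hv]
      exact Submodule.add_mem_sup
        (Submodule.smul_mem _ _ (Submodule.mem_span_singleton_self ℓ)) hmem
    have hsub : Subsingleton (M ⧸ (Submodule.span (𝓞 F) {ℓ} ⊔ orthComplement hherm ℓ)) := by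
      rw [Submodule.Quotient.subsingleton_iff]
      exact htop
    obtain ⟨eqv⟩ := hquot
    have hsub2 : Subsingleton ((𝓞 F) ⧸ Ideal.span {(2 : 𝓞 F)}) := eqv.symm.toEquiv.subsingleton
    have h1 : (1 : 𝓞 F) ∈ Ideal.span {(2 : 𝓞 F)} := by
      have h2 := Subsingleton.elim
        (Submodule.Quotient.mk (p := Ideal.span {(2 : 𝓞 F)}) 1) 0
      rwa [Submodule.Quotient.mk_eq_zero] at h2
    obtain ⟨c, hc⟩ := Ideal.mem_span_singleton'.mp h1
    have hun : IsUnit ((2:ℤ) : 𝓞 F) := by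
      refine IsUnit.of_mul_eq_one c ?_
      push_cast
      rw [mul_comm]
      exact hc
    exact aux_not_isUnit_intCast F (by norm_num) hun
  by_cases hm2 : m = -2
  · rw [hm, hm2]; norm_num
  · exfalso
    have h3 : 3 ≤ m.natAbs := by omega
    have hbez : (Int.gcd 2 m : ℤ) = 2 * Int.gcdA 2 m + m * Int.gcdB 2 m := Int.gcd_eq_gcd_ab 2 m
    obtain ⟨e, he⟩ : ((Int.gcd 2 m : ℤ)) ∣ m := Int.gcd_dvd_right 2 m
    have hdle : Int.gcd 2 m ≤ 2 := Nat.gcd_le_left _ (by norm_num)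
    have hgne : Int.gcd 2 m ≠ 0 := by
      intro h0
      rw [Int.gcd_eq_zero_iff] at h0
      norm_num at h0
    have hee : 2 ≤ e.natAbs := by
      have hna : m.natAbs = Int.gcd 2 m * e.natAbs := by
        conv_lhs => rw [he, Int.natAbs_mul, Int.natAbs_natCast]
      by_contra hcon
      push_neg at hcon
      have := Nat.mul_le_mul hdle (Nat.le_of_lt_succ hcon)
      omega
    have c1 : (((Int.gcd 2 m : ℤ)) : 𝓞 F) =
        2 * ((Int.gcdA 2 m : ℤ) : 𝓞 F) + ((m : ℤ) : 𝓞 F) * ((Int.gcdB 2 m : ℤ) : 𝓞 F) := by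
      exact_mod_cast congrArg (Int.cast : ℤ → 𝓞 F) hbez
    have c2 : ((m : ℤ) : 𝓞 F) = (((Int.gcd 2 m : ℤ)) : 𝓞 F) * ((e : ℤ) : 𝓞 F) := by
      exact_mod_cast congrArg (Int.cast : ℤ → 𝓞 F) he
    have hM : (((Int.gcd 2 m : ℤ)) : 𝓞 F) • ℓ =
        (((Int.gcd 2 m : ℤ)) : 𝓞 F) •
          (((e : ℤ) : 𝓞 F) • (((Int.gcdA 2 m : ℤ) : 𝓞 F) • u + ((Int.gcdB 2 m : ℤ) : 𝓞 F) • ℓ)) := by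
      calc (((Int.gcd 2 m : ℤ)) : 𝓞 F) • ℓ
          = ((2:𝓞 F) * ((Int.gcdA 2 m : ℤ) : 𝓞 F) + ((m : ℤ) : 𝓞 F) * ((Int.gcdB 2 m : ℤ) : 𝓞 F)) • ℓ := by
            rw [← c1]
        _ = ((Int.gcdA 2 m : ℤ) : 𝓞 F) • ((2:𝓞 F) • ℓ)
              + (((m : ℤ) : 𝓞 F) * ((Int.gcdB 2 m : ℤ) : 𝓞 F)) • ℓ := by
            rw [add_smul, smul_smul, mul_comm]
        _ = ((Int.gcdA 2 m : ℤ) : 𝓞 F) • (((m : ℤ) : 𝓞 F) • u)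
              + (((m : ℤ) : 𝓞 F) * ((Int.gcdB 2 m : ℤ) : 𝓞 F)) • ℓ := by
            rw [key]
        _ = (((Int.gcd 2 m : ℤ)) : 𝓞 F) •
              (((e : ℤ) : 𝓞 F) • (((Int.gcdA 2 m : ℤ) : 𝓞 F) • u + ((Int.gcdB 2 m : ℤ) : 𝓞 F) • ℓ)) := by
            rw [c2]
            module
    have hgz : ((((Int.gcd 2 m : ℤ)) : 𝓞 F)) ≠ 0 := by
      have hne : ((Int.gcd 2 m : ℤ)) ≠ 0 := by exact_mod_cast hgne
      exact_mod_cast hne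
    have hcancel := smul_right_injective M hgz hM
    exact aux_not_isUnit_intCast F hee (hprim _ _ hcancel)
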